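/- Let X be a normed space, T : X → X a nonexpansive linear map with fixed point x*, and x^0 ∈ X. For stepsizes β_n ∈ [0,1] with β_0 = 0, the Halpern iterates satisfy ‖x^n - T x^n‖ ≤ ‖x^0 - x*‖ · Θ_n(β), where Θ_n(β) = 1 - β_n + Π_{l=1}^n β_l + Σ_{k=1}^n |(2-β_{k-1})β_k - 1| · Π_{l=k+1}^n β_l. -/
import Mathlib


/-- For a nonexpansive linear map T on a normed space with fixed point
x*, the Halpern iterates x^n = (1-β_n)x⁰ + β_n T x^{n-1} (β₀ = 0, β_n ∈ [0,1])
satisfy ‖x^n - T x^n‖ ≤ ‖x⁰ - x*‖ Θ_n(β), where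
Θ_n(β) = 1 - β_n + Π_{l=1}^n β_l + Σ_{k=1}^n |(2-β_{k-1})β_k - 1| Π_{l=k+1}^n β_l. -/
theorem stmt15 {X : Type*} [NormedAddCommGroup X] [NormedSpace ℝ X]
    (T : X →ₗ[ℝ] X) (hT : ∀ u v : X, ‖T u - T v‖ ≤ ‖u - v‖)
    (xstar : X) (hfix : T xstar = xstar)
    (β : ℕ → ℝ) (hβ0 : β 0 = 0) (hβ : ∀ n, β n ∈ Set.Icc (0 : ℝ) 1)
    (x : ℕ → X)
    (hrec : ∀ n : ℕ, 1 ≤ n → x n = (1 - β n) • x 0 + β n • T (x (n-1))) :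
    ∀ n : ℕ, ‖x n - T (x n)‖ ≤ ‖x 0 - xstar‖ *
      (1 - β n + ∏ l ∈ Finset.Icc 1 n, β l +
        ∑ k ∈ Finset.Icc 1 n, |(2 - β (k-1)) * β k - 1| * ∏ l ∈ Finset.Icc (k+1) n, β l) := by
  set y0 : X := x 0 - xstar with hy0
  have hTT : ∀ (m : ℕ) (v : X), T ((T^m) v) = (T^(m+1)) v := by
    intro m v; rw [pow_succ']; rfl
  have hTnorm : ∀ m : ℕ, ‖(T^m) y0‖ ≤ ‖y0‖ := by
    intro m
    induction m with
    | zero => simp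
    | succ m ih =>
        rw [← hTT]
        calc ‖T ((T^m) y0)‖ = ‖T ((T^m) y0) - T 0‖ := by simp
          _ ≤ ‖(T^m) y0 - 0‖ := hT _ _
          _ ≤ ‖y0‖ := by simpa using ih
  have key : ∀ n : ℕ, x n - T (x n) =
      (1 - β n) • y0 +
      (∑ k ∈ Finset.Icc 1 n,
        (((2 - β (k-1)) * β k - 1) * ∏ l ∈ Finset.Icc (k+1) n, β l) • (T^(n+1-k)) y0) -
      (∏ l ∈ Finset.Icc 1 n, β l) • (T^(n+1)) y0 := by
    intro n
    induction n with
    | zero =>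
        simp [hβ0]
        rw [hy0, map_sub, hfix]
        abel
    | succ n ih =>
        have h1 : x (n+1) - T (x (n+1)) =
            (1 - β (n+1)) • (x 0 - T (x 0)) + β (n+1) • T (x n - T (x n)) := by
          rw [hrec (n+1) (by omega)]
          simp only [Nat.add_sub_cancel, map_add, map_smul, map_sub]
          module
        have h0 : x 0 - T (x 0) = y0 - T y0 := by
          rw [hy0, map_sub, hfix]; abel
        rw [h1, h0, ih]
        simp only [map_add, map_sub, map_smul, map_sum, hTT]
        rw [Finset.sum_Icc_succ_top (by omega : 1 ≤ n+1),
            Finset.prod_Icc_succ_top (by omega : 1 ≤ n+1)]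
        rw [show Finset.Icc (n+1+1) (n+1) = ∅ from Finset.Icc_eq_empty (by omega),
            show n+1+1-(n+1) = 1 by omega]
        have hsum : (∑ k ∈ Finset.Icc 1 n,
            (((2 - β (k-1)) * β k - 1) * ∏ l ∈ Finset.Icc (k+1) (n+1), β l) • (T^(n+1+1-k)) y0) =
            β (n+1) • ∑ k ∈ Finset.Icc 1 n,
            (((2 - β (k-1)) * β k - 1) * ∏ l ∈ Finset.Icc (k+1) n, β l) • (T^(n+1-k+1)) y0 := by
          rw [Finset.smul_sum]
          refine Finset.sum_congr rfl ?_
          intro k hk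
          obtain h := (Finset.mem_Icc.mp hk).2
          rw [Finset.prod_Icc_succ_top (by omega : k+1 ≤ n+1),
              show n+1+1-k = n+1-k+1 by omega, smul_smul]
          congr 1
          ring
        rw [hsum, pow_one]
        simp only [Finset.prod_empty, mul_one, Nat.add_sub_cancel]
        module
  intro n
  have hP : (0:ℝ) ≤ ∏ l ∈ Finset.Icc 1 n, β l :=
    Finset.prod_nonneg fun i _ => (hβ i).1
  have h1 : ‖(1 - β n) • y0‖ = (1 - β n) * ‖y0‖ := by
    rw [norm_smul, Real.norm_eq_abs, abs_of_nonneg (by linarith [(hβ n).2])]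
  have h2 : ‖(∏ l ∈ Finset.Icc 1 n, β l) • (T^(n+1)) y0‖ ≤
      (∏ l ∈ Finset.Icc 1 n, β l) * ‖y0‖ := by
    rw [norm_smul, Real.norm_eq_abs, abs_of_nonneg hP]
    exact mul_le_mul_of_nonneg_left (hTnorm _) hP
  have h3 : ‖∑ k ∈ Finset.Icc 1 n,
      (((2 - β (k-1)) * β k - 1) * ∏ l ∈ Finset.Icc (k+1) n, β l) • (T^(n+1-k)) y0‖ ≤
      ∑ k ∈ Finset.Icc 1 n,
      (|(2 - β (k-1)) * β k - 1| * ∏ l ∈ Finset.Icc (k+1) n, β l) * ‖y0‖ := by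
    refine (norm_sum_le _ _).trans (Finset.sum_le_sum ?_)
    intro k hk
    have hPk : (0:ℝ) ≤ ∏ l ∈ Finset.Icc (k+1) n, β l :=
      Finset.prod_nonneg fun i _ => (hβ i).1
    rw [norm_smul, Real.norm_eq_abs, abs_mul, abs_of_nonneg hPk]
    exact mul_le_mul_of_nonneg_left (hTnorm _)
      (mul_nonneg (abs_nonneg _) hPk)
  calc ‖x n - T (x n)‖
      ≤ ‖(1 - β n) • y0 +
          ∑ k ∈ Finset.Icc 1 n,
            (((2 - β (k-1)) * β k - 1) * ∏ l ∈ Finset.Icc (k+1) n, β l) • (T^(n+1-k)) y0‖ +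
        ‖(∏ l ∈ Finset.Icc 1 n, β l) • (T^(n+1)) y0‖ := by
        rw [key n]; exact norm_sub_le _ _
    _ ≤ (‖(1 - β n) • y0‖ +
          ‖∑ k ∈ Finset.Icc 1 n,
            (((2 - β (k-1)) * β k - 1) * ∏ l ∈ Finset.Icc (k+1) n, β l) • (T^(n+1-k)) y0‖) +
        ‖(∏ l ∈ Finset.Icc 1 n, β l) • (T^(n+1)) y0‖ := by
        gcongr
        exact norm_add_le _ _
    _ ≤ ((1 - β n) * ‖y0‖ +
          ∑ k ∈ Finset.Icc 1 n,
            (|(2 - β (k-1)) * β k - 1| * ∏ l ∈ Finset.Icc (k+1) n, β l) * ‖y0‖) +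
        (∏ l ∈ Finset.Icc 1 n, β l) * ‖y0‖ := by
        rw [h1]; gcongr
    _ = ‖y0‖ * (1 - β n + ∏ l ∈ Finset.Icc 1 n, β l +
          ∑ k ∈ Finset.Icc 1 n,
            |(2 - β (k-1)) * β k - 1| * ∏ l ∈ Finset.Icc (k+1) n, β l) := by
        rw [← Finset.sum_mul]; ring
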